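/- Let D ⊆ ℝ² be open and let x₀, t : D → ℂ³ and R : D → Matrix (Fin 3) (Fin 3) ℂ be twice continuously differentiable with (R p)ᵀ * R p = 1 for all p ∈ D. Define x p := (R p).mulVec (x₀ p) + t p and assume fderiv ℝ x p v = (R p).mulVec (fderiv ℝ x₀ p v) for all p ∈ D, v ∈ ℝ². Then for all p ∈ D and all v, w ∈ ℝ²: (fderiv ℝ x₀ p v) ⬝ (((R p)ᵀ * fderiv ℝ R p v).mulVec (fderiv ℝ x₀ p w)) = 0. (This is the paper's equation dx₀ᵀ R⁻¹dR dx₀ = 0.) -/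

import Mathlib

open Matrix

noncomputable instance : NormedAddCommGroup (Matrix (Fin 3) (Fin 3) ℂ) :=
  Matrix.normedAddCommGroup

noncomputable instance : NormedSpace ℝ (Matrix (Fin 3) (Fin 3) ℂ) :=
  Matrix.normedSpace

/-- The symmetric bilinear dot product on ℂ³ (not the Hermitian inner product). -/
def dot3 (x y : Fin 3 → ℂ) : ℂ := x 0 * y 0 + x 1 * y 1 + x 2 * y 2

section Aux

abbrev Mat3 := Matrix (Fin 3) (Fin 3) ℂ
abbrev Vec3 := Fin 3 → ℂ

/-- mulVec as a continuous ℝ-bilinear map -/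
noncomputable def mvB : Mat3 →L[ℝ] Vec3 →L[ℝ] Vec3 :=
  LinearMap.toContinuousLinearMap
  { toFun := fun M => LinearMap.toContinuousLinearMap (M.mulVecLin.restrictScalars ℝ)
    map_add' := fun M N => by ext v i; simp [Matrix.add_mulVec]
    map_smul' := fun r M => by
      ext v i
      simp [Matrix.mulVec, dotProduct, Finset.smul_sum, smul_mul_assoc, mul_assoc] }

@[simp] lemma mvB_apply (M : Mat3) (v : Vec3) : mvB M v = M.mulVec v := rfl

attribute [-instance] instTopologicalSpaceMatrix Matrix.instUniformSpace

/-- matrix multiplication as a continuous ℝ-bilinear map -/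
noncomputable def mmB : Mat3 →L[ℝ] Mat3 →L[ℝ] Mat3 :=
  LinearMap.toContinuousLinearMap
  { toFun := fun M => LinearMap.toContinuousLinearMap
      { toFun := fun N => M * N
        map_add' := fun N N' => mul_add M N N'
        map_smul' := fun r N => by simp [Matrix.mul_smul] }
    map_add' := fun M N => by ext N' i j; simp [add_mul]
    map_smul' := fun r M => by ext N' i j; simp [Matrix.smul_mul] }

@[simp] lemma mmB_apply (M N : Mat3) : mmB M N = M * N := rfl

attribute [instance] instTopologicalSpaceMatrix Matrix.instUniformSpace

/-- transpose as a continuous ℝ-linear map -/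
noncomputable def trC : Mat3 →L[ℝ] Mat3 :=
  LinearMap.toContinuousLinearMap
  { toFun := Matrix.transpose
    map_add' := fun M N => Matrix.transpose_add M N
    map_smul' := fun r M => Matrix.transpose_smul r M }

@[simp] lemma trC_apply (M : Mat3) : trC M = Mᵀ := rfl

variable {M : ℝ × ℝ → Mat3} {u : ℝ × ℝ → Vec3} {N : ℝ × ℝ → Mat3} {p : ℝ × ℝ}

lemma diffAt_mulVec (hM : DifferentiableAt ℝ M p) (hu : DifferentiableAt ℝ u p) :
    DifferentiableAt ℝ (fun q => (M q).mulVec (u q)) p := by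
  have : DifferentiableAt ℝ (fun q => mvB (M q)) p := (mvB.differentiable.differentiableAt).comp p hM
  exact this.clm_apply hu

lemma fderiv_mulVec (hM : DifferentiableAt ℝ M p) (hu : DifferentiableAt ℝ u p) (v : ℝ × ℝ) :
    fderiv ℝ (fun q => (M q).mulVec (u q)) p v
      = (fderiv ℝ M p v).mulVec (u p) + (M p).mulVec (fderiv ℝ u p v) := by
  have hc : DifferentiableAt ℝ (fun q => mvB (M q)) p :=
    (mvB.differentiable.differentiableAt).comp p hM
  have h := fderiv_clm_apply (c := fun q => mvB (M q)) (u := u) hc hu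
  have hc' : fderiv ℝ (fun q => mvB (M q)) p = mvB.comp (fderiv ℝ M p) :=
    (mvB.hasFDerivAt.comp p hM.hasFDerivAt).fderiv
  rw [show (fun q => (M q).mulVec (u q)) = fun q => (mvB (M q)) (u q) from rfl, h, hc']
  simp [add_comm]

lemma fderiv_matmul (hM : DifferentiableAt ℝ M p) (hN : DifferentiableAt ℝ N p) (v : ℝ × ℝ) :
    fderiv ℝ (fun q => M q * N q) p v
      = (fderiv ℝ M p v) * N p + (M p) * (fderiv ℝ N p v) := by
  have hc : DifferentiableAt ℝ (fun q => mmB (M q)) p :=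
    (mmB.differentiable.differentiableAt).comp p hM
  have h := fderiv_clm_apply (c := fun q => mmB (M q)) (u := N) hc hN
  have hc' : fderiv ℝ (fun q => mmB (M q)) p = mmB.comp (fderiv ℝ M p) :=
    (mmB.hasFDerivAt.comp p hM.hasFDerivAt).fderiv
  erw [show (fun q => M q * N q) = fun q => (mmB (M q)) (N q) from rfl, h, hc']
  simp [add_comm]
  exact add_comm _ _

lemma fderiv_transpose (hM : DifferentiableAt ℝ M p) :
    fderiv ℝ (fun q => (M q)ᵀ) p = trC.comp (fderiv ℝ M p) :=
  (trC.hasFDerivAt.comp p hM.hasFDerivAt).fderiv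

lemma dot3_comm (a b : Vec3) : dot3 a b = dot3 b a := by simp [dot3]; ring

lemma dot3_transpose (Q : Mat3) (a b : Vec3) :
    dot3 (Qᵀ.mulVec a) b = dot3 a (Q.mulVec b) := by
  simp [dot3, Matrix.mulVec, dotProduct, Fin.sum_univ_three, Matrix.transpose_apply]
  ring

attribute [-instance] instTopologicalSpaceMatrix Matrix.instUniformSpace

lemma fderiv_apply_const_aux {F : ℝ × ℝ → (ℝ × ℝ →L[ℝ] Mat3)} (hF : DifferentiableAt ℝ F p)
    (a b : ℝ × ℝ) : fderiv ℝ (fun q => F q a) p b = fderiv ℝ F p b a := by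
  rw [fderiv_clm_apply hF (differentiableAt_const a)]
  simp

end Aux

attribute [instance] instTopologicalSpaceMatrix Matrix.instUniformSpace

/-- The paper's equation dx₀ᵀ R⁻¹dR dx₀ = 0 for a rolling. -/
theorem rolling_dx0_skew (D : Set (ℝ × ℝ)) (hD : IsOpen D)
    (x₀ t : ℝ × ℝ → Fin 3 → ℂ) (R : ℝ × ℝ → Matrix (Fin 3) (Fin 3) ℂ)
    (hx₀ : ContDiffOn ℝ 2 x₀ D) (ht : ContDiffOn ℝ 2 t D) (hR : ContDiffOn ℝ 2 R D)
    (horth : ∀ p ∈ D, (R p)ᵀ * R p = 1)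
    (x : ℝ × ℝ → Fin 3 → ℂ)
    (hx : ∀ p, x p = (R p).mulVec (x₀ p) + t p)
    (hdx : ∀ p ∈ D, ∀ v : ℝ × ℝ, fderiv ℝ x p v = (R p).mulVec (fderiv ℝ x₀ p v)) :
    ∀ p ∈ D, ∀ v w : ℝ × ℝ,
      dot3 (fderiv ℝ x₀ p v)
        (((R p)ᵀ * fderiv ℝ R p v).mulVec (fderiv ℝ x₀ p w)) = 0 := by
  -- differentiability of everything on D
  have hx₀d : ∀ p ∈ D, DifferentiableAt ℝ x₀ p := fun p hp =>
    ((hx₀.contDiffAt (hD.mem_nhds hp)).differentiableAt (by norm_num))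
  have htd : ∀ p ∈ D, DifferentiableAt ℝ t p := fun p hp =>
    ((ht.contDiffAt (hD.mem_nhds hp)).differentiableAt (by norm_num))
  have hRd : ∀ p ∈ D, DifferentiableAt ℝ R p := fun p hp =>
    ((hR.contDiffAt (hD.mem_nhds hp)).differentiableAt (by norm_num))
  have hR'd : ∀ p ∈ D, DifferentiableAt ℝ (fderiv ℝ R) p := fun p hp =>
    (((hR.fderiv_of_isOpen hD (m := 1) (by norm_num)).contDiffAt (hD.mem_nhds hp)).differentiableAt
      (by norm_num))
  have ht'd : ∀ p ∈ D, DifferentiableAt ℝ (fderiv ℝ t) p := fun p hp =>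
    (((ht.fderiv_of_isOpen hD (m := 1) (by norm_num)).contDiffAt (hD.mem_nhds hp)).differentiableAt
      (by norm_num))
  -- step 2: dR(v) x₀ + dt(v) = 0 on D
  have hG : ∀ q ∈ D, ∀ v : ℝ × ℝ,
      (fderiv ℝ R q v).mulVec (x₀ q) + fderiv ℝ t q v = 0 := by
    intro q hq v
    have hxeq : x = fun q => (R q).mulVec (x₀ q) + t q := funext hx
    have hd1 : DifferentiableAt ℝ (fun q => (R q).mulVec (x₀ q)) q :=
      diffAt_mulVec (hRd q hq) (hx₀d q hq)
    have : fderiv ℝ x q v = (fderiv ℝ R q v).mulVec (x₀ q) + (R q).mulVec (fderiv ℝ x₀ q v)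
        + fderiv ℝ t q v := by
      rw [hxeq, fderiv_fun_add hd1 (htd q hq)]
      simp [fderiv_mulVec (hRd q hq) (hx₀d q hq) v]
    rw [hdx q hq v] at this
    have h3 := sub_eq_zero_of_eq this.symm
    rw [← h3]; abel
  intro p hp v w
  have hpD : D ∈ nhds p := hD.mem_nhds hp
  -- step 1: skewness of Rᵀ dR
  have hskew : ∀ u : ℝ × ℝ, (fderiv ℝ R p u)ᵀ * R p + (R p)ᵀ * fderiv ℝ R p u = 0 := by
    intro u
    have hTd : DifferentiableAt ℝ (fun q => (R q)ᵀ) p :=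
      (trC.differentiable.differentiableAt).comp p (hRd p hp)
    have h1 : fderiv ℝ (fun q => (R q)ᵀ * R q) p u
        = (fderiv ℝ R p u)ᵀ * R p + (R p)ᵀ * fderiv ℝ R p u := by
      rw [fderiv_matmul hTd (hRd p hp) u]
      have h2 := fderiv_transpose (hRd p hp)
      rw [h2]
      rfl
    have h0 : fderiv ℝ (fun q => (R q)ᵀ * R q) p = fderiv ℝ (fun _ : ℝ × ℝ => (1 : Mat3)) p := by
      apply Filter.EventuallyEq.fderiv_eq
      filter_upwards [hpD] with q hq using horth q hq
    rw [h0, fderiv_fun_const] at h1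
    simpa using h1.symm
  -- step 3: second derivative of the rolling identity
  have hRv : ∀ u : ℝ × ℝ, DifferentiableAt ℝ (fun q => fderiv ℝ R q u) p :=
    fun u => (hR'd p hp).clm_apply (differentiableAt_const u)
  have htv : ∀ u : ℝ × ℝ, DifferentiableAt ℝ (fun q => fderiv ℝ t q u) p :=
    fun u => (ht'd p hp).clm_apply (differentiableAt_const u)
  have key : ∀ a b : ℝ × ℝ,
      (fderiv ℝ (fderiv ℝ R) p b a).mulVec (x₀ p)
        + (fderiv ℝ R p a).mulVec (fderiv ℝ x₀ p b)
        + fderiv ℝ (fderiv ℝ t) p b a = 0 := by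
    intro a b
    have hA : DifferentiableAt ℝ (fun q => (fderiv ℝ R q a).mulVec (x₀ q)) p :=
      diffAt_mulVec (hRv a) (hx₀d p hp)
    have h0 : fderiv ℝ (fun q => (fderiv ℝ R q a).mulVec (x₀ q) + fderiv ℝ t q a) p
        = fderiv ℝ (fun _ : ℝ × ℝ => (0 : Fin 3 → ℂ)) p := by
      apply Filter.EventuallyEq.fderiv_eq
      filter_upwards [hpD] with q hq using hG q hq a
    rw [fderiv_fun_const] at h0
    have hval : fderiv ℝ (fun q => (fderiv ℝ R q a).mulVec (x₀ q) + fderiv ℝ t q a) p b = 0 := by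
      rw [h0]; rfl
    rw [fderiv_fun_add hA (htv a)] at hval
    have e1 : fderiv ℝ (fun q => (fderiv ℝ R q a).mulVec (x₀ q)) p b
        = (fderiv ℝ (fderiv ℝ R) p b a).mulVec (x₀ p)
          + (fderiv ℝ R p a).mulVec (fderiv ℝ x₀ p b) := by
      rw [fderiv_mulVec (hRv a) (hx₀d p hp) b]
      congr 2
      exact fderiv_apply_const_aux (hR'd p hp) a b
    have e2 : fderiv ℝ (fun q => fderiv ℝ t q a) p b = fderiv ℝ (fderiv ℝ t) p b a := by
      rw [fderiv_clm_apply (ht'd p hp) (differentiableAt_const a)]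
      simp
    simp only [ContinuousLinearMap.add_apply] at hval
    rw [e1, e2] at hval
    exact hval
  -- symmetry of second derivatives
  have hsymR := (hR.contDiffAt hpD).isSymmSndFDerivAt (by simp)
  have hsymt := (ht.contDiffAt hpD).isSymmSndFDerivAt (by simp)
  -- step: dR(v) dx₀(w) = dR(w) dx₀(v)
  have hsym2 : (fderiv ℝ R p v).mulVec (fderiv ℝ x₀ p w)
      = (fderiv ℝ R p w).mulVec (fderiv ℝ x₀ p v) := by
    have k1 := key v w
    have k2 := key w v
    have e3 : fderiv ℝ (fderiv ℝ R) p w v = fderiv ℝ (fderiv ℝ R) p v w := hsymR w v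
    have e4 : fderiv ℝ (fderiv ℝ t) p w v = fderiv ℝ (fderiv ℝ t) p v w := hsymt w v
    rw [e3, e4] at k1
    have := sub_eq_zero_of_eq (k1.trans k2.symm)
    have h4 : (fderiv ℝ R p v).mulVec (fderiv ℝ x₀ p w)
        - (fderiv ℝ R p w).mulVec (fderiv ℝ x₀ p v) = 0 := by
      rw [← this]; abel
    exact sub_eq_zero.mp h4
  -- final algebra
  set y := fderiv ℝ x₀ p v with hy
  set z := fderiv ℝ x₀ p w with hz
  set B : Mat3 := (R p)ᵀ * fderiv ℝ R p w with hB
  have hBskew : Bᵀ = -B := by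
    have h5 := hskew w
    have h6 : Bᵀ = (fderiv ℝ R p w)ᵀ * R p := by
      rw [hB, Matrix.transpose_mul, Matrix.transpose_transpose]
    rw [h6]
    linear_combination (norm := abel) h5
  have step : ((R p)ᵀ * fderiv ℝ R p v).mulVec z = B.mulVec y := by
    rw [← Matrix.mulVec_mulVec, ← Matrix.mulVec_mulVec, hsym2]
  rw [step]
  have h7 : dot3 y (B.mulVec y) = - dot3 y (B.mulVec y) := by
    conv_lhs => rw [← dot3_transpose B y y]
    rw [hBskew, Matrix.neg_mulVec]
    rw [dot3_comm]
    simp [dot3]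
    ring
  linear_combination h7 / 2
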